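/- arXiv:1302.1808 — 2 statements merged into one kernel-verified Lean document; each statement's English description precedes it below -/
import Mathlib

section
/- (Lemma 3.5) Fix an integer k ≥ 3, α ∈ (0,1), ε > 0, and set K = (4+ε)·(k!)²/α^{k−1} and p_n = (K·log n / n^{k−1})^{1/k}. Then there is a sequence ε_n → 0 such that for all n and every integer j with α·n ≤ j ≤ (k−α)·n, E[Y*_{k,n}(j)] ≤ E[Y_{k,n}(j)] ≤ E[Y*_{k,n}(j)] + ε_n. -/
open MeasureTheory Filter
open scoped ENNReal

/-- Bernoulli PMF on `Bool` with success probability `p` (clamped to `[0,1]`). -/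
noncomputable def bern (p : ℝ) : PMF Bool :=
  PMF.bernoulli (min (Real.toNNReal p) 1) (min_le_right _ _)

/-- The product Bernoulli measure on subsets of `{0, …, n}` (encoded as indicator
functions `Fin (n+1) → Bool`): each element is included independently w.p. `p`. -/
noncomputable def randSet (n : ℕ) (p : ℝ) : Measure (Fin (n + 1) → Bool) :=
  Measure.pi fun _ => (bern p).toMeasure

/-- The `k`-element subsets of the random set `ω` whose elements sum to `j`. -/
def repFinsets (n k j : ℕ) (ω : Fin (n + 1) → Bool) : Finset (Finset (Fin (n + 1))) :=
  Finset.univ.filter fun S => S.card = k ∧ (∑ i ∈ S, (i : ℕ)) = j ∧ ∀ i ∈ S, ω i = true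

/-- `Y n k j ω` : the number of `k`-element subsets of the random set `ω` summing to `j`. -/
def Y (n k j : ℕ) (ω : Fin (n + 1) → Bool) : ℕ := (repFinsets n k j ω).card

open scoped Classical in
/-- `Ystar n k j ω` : the maximum size of a collection of pairwise disjoint `k`-element
subsets of the random set `ω`, each of whose elements sum to `j`. -/
noncomputable def Ystar (n k j : ℕ) (ω : Fin (n + 1) → Bool) : ℕ :=
  (Finset.univ.filter fun 𝒞 : Finset (Finset (Fin (n + 1))) =>
    (∀ S ∈ 𝒞, S ∈ repFinsets n k j ω) ∧
      (𝒞 : Set (Finset (Fin (n + 1)))).Pairwise fun S T => Disjoint S T).sup Finset.card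

open Finset in
noncomputable def pickTop {n : ℕ} (A : Finset (Fin (n+1))) : Fin (n+1) :=
  if h : A.Nonempty then A.max' h else ⟨0, n.succ_pos⟩

lemma count0 (n m c : ℕ) :
    ((Finset.univ.filter fun A : Finset (Fin (n+1)) =>
      A.card = m + 1 ∧ (∑ i ∈ A, (i : ℕ)) = c)).card ≤ (n+1)^m := by
  classical
  have h1 : ((Finset.univ.filter fun A : Finset (Fin (n+1)) =>
      A.card = m + 1 ∧ (∑ i ∈ A, (i : ℕ)) = c)).card
      ≤ (Finset.univ.powersetCard m : Finset (Finset (Fin (n+1)))).card := by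
    apply Finset.card_le_card_of_injOn (fun A => A.erase (pickTop A))
    · intro A hA
      rw [Finset.mem_coe, Finset.mem_filter] at hA
      have hne : A.Nonempty := Finset.card_pos.mp (by omega)
      rw [Finset.mem_coe, Finset.mem_powersetCard]
      refine ⟨Finset.subset_univ _, ?_⟩
      rw [Finset.card_erase_of_mem (by rw [pickTop, dif_pos hne]; exact A.max'_mem hne)]
      omega
    · intro A hA B hB hAB
      simp only [Finset.coe_filter, Set.mem_setOf_eq, Finset.mem_univ, true_and] at hA hB
      have hneA : A.Nonempty := Finset.card_pos.mp (by omega)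
      have hneB : B.Nonempty := Finset.card_pos.mp (by omega)
      set a := pickTop A with ha
      set b := pickTop B with hb
      have haA : a ∈ A := by rw [ha, pickTop, dif_pos hneA]; exact A.max'_mem hneA
      have hbB : b ∈ B := by rw [hb, pickTop, dif_pos hneB]; exact B.max'_mem hneB
      have hsA : (a : ℕ) + ∑ i ∈ A.erase a, (i : ℕ) = c := by
        rw [Finset.add_sum_erase _ _ haA]; exact hA.2
      have hsB : (b : ℕ) + ∑ i ∈ B.erase b, (i : ℕ) = c := by
        rw [Finset.add_sum_erase _ _ hbB]; exact hB.2
      have hRE : A.erase a = B.erase b := hAB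
      have : (a : ℕ) = (b : ℕ) := by rw [hRE] at hsA; omega
      have hab : a = b := Fin.ext this
      rw [← Finset.insert_erase haA, ← Finset.insert_erase hbB, hRE, hab]
  calc _ ≤ _ := h1
    _ ≤ (n+1)^m := by
        rw [Finset.card_powersetCard, Finset.card_univ, Fintype.card_fin]
        exact Nat.choose_le_pow (n+1) m

lemma countT (n k j s : ℕ) (hs : 1 ≤ s) (S : Finset (Fin (n+1))) (hS : S.card = k) :
    ((Finset.univ.filter fun T : Finset (Fin (n+1)) =>
      (T.card = k ∧ (∑ i ∈ T, (i : ℕ)) = j ∧ T ≠ S ∧ ¬ Disjoint S T) ∧ (T \ S).card = s)).card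
      ≤ 2^k * (n+1)^(s-1) := by
  classical
  set target := S.powerset.sigma (fun B => Finset.univ.filter
    fun D : Finset (Fin (n+1)) => D.card = s ∧ (∑ i ∈ B, (i : ℕ)) + ∑ i ∈ D, (i : ℕ) = j)
    with htarget
  have h1 : ((Finset.univ.filter fun T : Finset (Fin (n+1)) =>
      (T.card = k ∧ (∑ i ∈ T, (i : ℕ)) = j ∧ T ≠ S ∧ ¬ Disjoint S T) ∧ (T \ S).card = s)).card
      ≤ target.card := by
    apply Finset.card_le_card_of_injOn (fun T => ⟨T ∩ S, T \ S⟩)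
    · intro T hT
      rw [Finset.mem_coe, Finset.mem_filter] at hT
      rw [htarget, Finset.mem_coe, Finset.mem_sigma]
      refine ⟨Finset.mem_powerset.mpr Finset.inter_subset_right,
        Finset.mem_filter.mpr ⟨Finset.mem_univ _, hT.2.2, ?_⟩⟩
      rw [Finset.sum_inter_add_sum_sdiff]
      exact hT.2.1.2.1
    · intro T hT T' hT' h
      simp only [Sigma.mk.inj_iff] at h
      have h2 : T \ S = T' \ S := eq_of_heq h.2
      have h1 : T ∩ S = T' ∩ S := h.1
      rw [← Finset.sdiff_union_inter T S, h1, h2, Finset.sdiff_union_inter]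
  have h2 : target.card ≤ 2^k * (n+1)^(s-1) := by
    rw [htarget, Finset.card_sigma]
    calc ∑ B ∈ S.powerset, (Finset.univ.filter
          fun D : Finset (Fin (n+1)) => D.card = s ∧ (∑ i ∈ B, (i : ℕ)) + ∑ i ∈ D, (i : ℕ) = j).card
        ≤ ∑ _B ∈ S.powerset, (n+1)^(s-1) := by
          apply Finset.sum_le_sum
          intro B _
          calc (Finset.univ.filter
              fun D : Finset (Fin (n+1)) => D.card = s ∧ (∑ i ∈ B, (i : ℕ)) + ∑ i ∈ D, (i : ℕ) = j).card
              ≤ ((Finset.univ.filter fun D : Finset (Fin (n+1)) =>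
                D.card = (s-1) + 1 ∧ (∑ i ∈ D, (i : ℕ)) = j - ∑ i ∈ B, (i : ℕ))).card := by
                apply Finset.card_le_card
                apply Finset.monotone_filter_right
                intro D hD ⟨hD1, hD2⟩
                constructor
                · omega
                · omega
            _ ≤ (n+1)^(s-1) := count0 n (s-1) _
      _ = 2^k * (n+1)^(s-1) := by
          rw [Finset.sum_const, Finset.card_powerset, hS, smul_eq_mul]
  exact h1.trans h2

/-- The deterministic set of intersecting pairs. -/
def PD (n k j : ℕ) : Finset ((Finset (Fin (n+1))) × (Finset (Fin (n+1)))) :=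
  (Finset.univ ×ˢ Finset.univ).filter fun pr =>
    pr.1.card = k ∧ (∑ i ∈ pr.1, (i : ℕ)) = j ∧ pr.2.card = k ∧ (∑ i ∈ pr.2, (i : ℕ)) = j ∧
      pr.1 ≠ pr.2 ∧ ¬ Disjoint pr.1 pr.2

lemma diff_card_mem_Icc {n k : ℕ} {S T : Finset (Fin (n+1))} (hS : S.card = k)
    (hT : T.card = k) (hne : T ≠ S) (hdisj : ¬ Disjoint S T) :
    (T \ S).card ∈ Finset.Icc 1 (k-1) := by
  classical
  have h1 : (T ∩ S).card + (T \ S).card = T.card := Finset.card_inter_add_card_sdiff T S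
  have h2 : (T ∩ S).Nonempty := by
    rw [Finset.inter_comm]
    exact Finset.not_disjoint_iff_nonempty_inter.mp hdisj
  have h3 : 1 ≤ (T ∩ S).card := Finset.card_pos.mpr h2
  have h4 : (T \ S).card ≠ 0 := by
    intro h0
    have : T \ S = ∅ := Finset.card_eq_zero.mp h0
    have hsub : T ⊆ S := by
      intro x hx
      by_contra hxs
      exact (Finset.notMem_empty x) (this ▸ Finset.mem_sdiff.mpr ⟨hx, hxs⟩)
    exact hne (Finset.eq_of_subset_of_card_le hsub (by omega))
  rw [Finset.mem_Icc]
  omega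

lemma sumBound (n k j : ℕ) (hk1 : 1 ≤ k) (q : ℝ) (hq0 : 0 ≤ q) (hq1 : q ≤ 1) :
    ∑ pr ∈ PD n k j, q ^ (pr.1 ∪ pr.2).card
      ≤ (((n+1)^(k-1) : ℕ) : ℝ) *
        ∑ s ∈ Finset.Icc 1 (k-1), ((2^k * (n+1)^(s-1) : ℕ) : ℝ) * q ^ (k + s) := by
  classical
  -- inner bound
  have inner : ∀ S : Finset (Fin (n+1)), S.card = k →
      (∑ T ∈ Finset.univ.filter (fun T : Finset (Fin (n+1)) =>
        T.card = k ∧ (∑ i ∈ T, (i : ℕ)) = j ∧ T ≠ S ∧ ¬ Disjoint S T),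
          q ^ (S ∪ T).card)
      ≤ ∑ s ∈ Finset.Icc 1 (k-1), ((2^k * (n+1)^(s-1) : ℕ) : ℝ) * q ^ (k + s) := by
    intro S hS
    set TS := Finset.univ.filter (fun T : Finset (Fin (n+1)) =>
        T.card = k ∧ (∑ i ∈ T, (i : ℕ)) = j ∧ T ≠ S ∧ ¬ Disjoint S T) with hTS
    have hmaps : ∀ T ∈ TS, (T \ S).card ∈ Finset.Icc 1 (k-1) := by
      intro T hT
      rw [hTS, Finset.mem_filter] at hT
      exact diff_card_mem_Icc hS hT.2.1 hT.2.2.2.1 hT.2.2.2.2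
    rw [← Finset.sum_fiberwise_of_maps_to hmaps (fun T => q ^ (S ∪ T).card)]
    apply Finset.sum_le_sum
    intro s hs
    rw [Finset.mem_Icc] at hs
    -- each T in the fiber contributes q^(k+s)
    have hfib : ∀ T ∈ TS.filter (fun T => (T \ S).card = s),
        q ^ (S ∪ T).card = q ^ (k + s) := by
      intro T hT
      rw [Finset.mem_filter, hTS, Finset.mem_filter] at hT
      congr 1
      have : (T \ S).card + S.card = (T ∪ S).card := Finset.card_sdiff_add_card T S
      rw [Finset.union_comm]
      omega
    rw [Finset.sum_congr rfl hfib, Finset.sum_const, nsmul_eq_mul]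
    apply mul_le_mul_of_nonneg_right _ (pow_nonneg hq0 _)
    have hcard : (TS.filter (fun T => (T \ S).card = s)).card ≤ 2^k * (n+1)^(s-1) := by
      have hsub : TS.filter (fun T => (T \ S).card = s) ⊆
          Finset.univ.filter fun T : Finset (Fin (n+1)) =>
            (T.card = k ∧ (∑ i ∈ T, (i : ℕ)) = j ∧ T ≠ S ∧ ¬ Disjoint S T) ∧ (T \ S).card = s := by
        intro T hT
        rw [Finset.mem_filter, hTS, Finset.mem_filter] at hT
        rw [Finset.mem_filter]
        exact ⟨Finset.mem_univ _, hT.1.2, hT.2⟩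
      exact (Finset.card_le_card hsub).trans (countT n k j s hs.1 S hS)
    exact_mod_cast Nat.cast_le.mpr hcard
  -- outer sum
  have expand : ∑ pr ∈ PD n k j, q ^ (pr.1 ∪ pr.2).card
      = ∑ S ∈ (Finset.univ.filter fun S : Finset (Fin (n+1)) =>
          S.card = k ∧ (∑ i ∈ S, (i : ℕ)) = j),
          ∑ T ∈ Finset.univ.filter (fun T : Finset (Fin (n+1)) =>
            T.card = k ∧ (∑ i ∈ T, (i : ℕ)) = j ∧ T ≠ S ∧ ¬ Disjoint S T),
            q ^ (S ∪ T).card := by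
    rw [PD, Finset.sum_filter, Finset.sum_product]
    rw [Finset.sum_filter]
    apply Finset.sum_congr rfl
    intro S _
    rw [Finset.sum_filter]
    by_cases hS : S.card = k ∧ (∑ i ∈ S, (i : ℕ)) = j
    · rw [if_pos hS]
      apply Finset.sum_congr rfl
      intro T _
      by_cases hT : T.card = k ∧ (∑ i ∈ T, (i : ℕ)) = j ∧ T ≠ S ∧ ¬ Disjoint S T
      · rw [if_pos ⟨hS.1, hS.2, hT.1, hT.2.1, Ne.symm hT.2.2.1, hT.2.2.2⟩, if_pos hT]
      · rw [if_neg, if_neg hT]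
        intro hfull
        exact hT ⟨hfull.2.2.1, hfull.2.2.2.1, Ne.symm hfull.2.2.2.2.1, hfull.2.2.2.2.2⟩
    · rw [if_neg hS]
      apply Finset.sum_eq_zero
      intro T _
      rw [if_neg]
      intro hfull
      exact hS ⟨hfull.1, hfull.2.1⟩
  rw [expand]
  calc _ ≤ ∑ _S ∈ (Finset.univ.filter fun S : Finset (Fin (n+1)) =>
          S.card = k ∧ (∑ i ∈ S, (i : ℕ)) = j),
          ∑ s ∈ Finset.Icc 1 (k-1), ((2^k * (n+1)^(s-1) : ℕ) : ℝ) * q ^ (k + s) := by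
        apply Finset.sum_le_sum
        intro S hS
        rw [Finset.mem_filter] at hS
        exact inner S hS.2.1
    _ ≤ _ := by
        rw [Finset.sum_const, nsmul_eq_mul]
        apply mul_le_mul_of_nonneg_right
        · refine Nat.cast_le.mpr ?_
          have := count0 n (k-1) j
          have hkk : k - 1 + 1 = k := by omega
          rw [hkk] at this
          exact this
        · apply Finset.sum_nonneg
          intro s _
          positivity

open scoped Classical in
noncomputable def badPairs (n k j : ℕ) (ω : Fin (n + 1) → Bool) :
    Finset ((Finset (Fin (n+1))) × (Finset (Fin (n+1)))) :=
  (PD n k j).filter fun pr => ∀ i ∈ pr.1 ∪ pr.2, ω i = true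

lemma Ystar_le_Y (n k j : ℕ) (ω : Fin (n + 1) → Bool) : Ystar n k j ω ≤ Y n k j ω := by
  classical
  rw [Ystar]
  apply Finset.sup_le
  intro 𝒞 h𝒞
  rw [Finset.mem_filter] at h𝒞
  exact Finset.card_le_card fun S hS => h𝒞.2.1 S hS

lemma Y_le_Ystar_add (n k j : ℕ) (ω : Fin (n + 1) → Bool) :
    Y n k j ω ≤ Ystar n k j ω + (badPairs n k j ω).card := by
  classical
  set G := repFinsets n k j ω with hG
  set Bad := G.filter (fun S => ∃ T ∈ G, T ≠ S ∧ ¬ Disjoint S T) with hBad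
  have hBadG : Bad ⊆ G := Finset.filter_subset _ _
  -- the good family is pairwise disjoint
  have hgood : (G \ Bad) ∈ (Finset.univ.filter fun 𝒞 : Finset (Finset (Fin (n + 1))) =>
      (∀ S ∈ 𝒞, S ∈ repFinsets n k j ω) ∧
        ((𝒞 : Set (Finset (Fin (n + 1)))).Pairwise fun S T => Disjoint S T)) := by
    rw [Finset.mem_filter]
    refine ⟨Finset.mem_univ _, fun S hS => (Finset.mem_sdiff.mp hS).1, ?_⟩
    intro S hS T hT hne
    by_contra hd
    rw [Finset.mem_coe, Finset.mem_sdiff] at hS hT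
    exact hS.2 (Finset.mem_filter.mpr ⟨hS.1, ⟨T, hT.1, Ne.symm hne, hd⟩⟩)
  have h1 : (G \ Bad).card ≤ Ystar n k j ω := by
    rw [Ystar]
    exact Finset.le_sup hgood
  have h2 : Bad.card ≤ (badPairs n k j ω).card := by
    apply Finset.card_le_card_of_injOn
      (fun S => (S, if h : ∃ T ∈ G, T ≠ S ∧ ¬ Disjoint S T then h.choose else ∅))
    · intro S hS
      rw [hBad, Finset.mem_coe, Finset.mem_filter] at hS
      obtain ⟨hSG, hex⟩ := hS
      beta_reduce
      rw [Finset.mem_coe, dif_pos hex]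
      obtain ⟨hTG, hTne, hTd⟩ := hex.choose_spec
      set T := hex.choose
      rw [badPairs, Finset.mem_filter, PD, Finset.mem_filter]
      rw [hG, repFinsets, Finset.mem_filter] at hSG hTG
      refine ⟨⟨Finset.mem_mk.mpr ?_, hSG.2.1, hSG.2.2.1, hTG.2.1, hTG.2.2.1,
        Ne.symm hTne, hTd⟩, ?_⟩
      · exact Finset.mem_product.mpr ⟨Finset.mem_univ _, Finset.mem_univ _⟩
      · intro i hi
        rcases Finset.mem_union.mp hi with h | h
        · exact hSG.2.2.2 i h
        · exact hTG.2.2.2 i h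
    · intro S _ S' _ h
      exact congrArg Prod.fst h
  have h3 : (G \ Bad).card + Bad.card = G.card := Finset.card_sdiff_add_card_eq_card hBadG
  have : Y n k j ω = G.card := rfl
  omega

instance (n : ℕ) (p : ℝ) : IsProbabilityMeasure (randSet n p) := by
  rw [randSet]; infer_instance

lemma meas_event (n : ℕ) (p : ℝ) (U : Finset (Fin (n+1))) :
    randSet n p {ω | ∀ i ∈ U, ω i = true} = ((min (Real.toNNReal p) 1 : NNReal) : ℝ≥0∞) ^ U.card := by
  classical
  have hset : {ω : Fin (n+1) → Bool | ∀ i ∈ U, ω i = true}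
      = Set.pi Set.univ (fun i => if i ∈ U then ({true} : Set Bool) else Set.univ) := by
    ext ω
    simp only [Set.mem_setOf_eq, Set.mem_pi, Set.mem_univ, forall_true_left]
    refine forall_congr' fun i => ?_
    by_cases hi : i ∈ U <;> simp [hi]
  rw [hset, randSet, Measure.pi_pi]
  have hfac : ∀ i : Fin (n+1), (bern p).toMeasure (if i ∈ U then ({true} : Set Bool) else Set.univ)
      = if i ∈ U then ((min (Real.toNNReal p) 1 : NNReal) : ℝ≥0∞) else 1 := by
    intro i
    split_ifs with hi
    · rw [PMF.toMeasure_apply_singleton _ _ (measurableSet_singleton _), bern,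
        PMF.bernoulli_apply]
      rfl
    · exact measure_univ
  rw [Finset.prod_congr rfl (fun i _ => hfac i), Finset.prod_ite_mem, Finset.univ_inter,
    Finset.prod_const]

lemma int_event (n : ℕ) (p : ℝ) (hp : 0 ≤ p) (U : Finset (Fin (n+1))) :
    ∫ ω, (if ∀ i ∈ U, ω i = true then (1:ℝ) else 0) ∂ randSet n p = (min p 1) ^ U.card := by
  classical
  have hms : MeasurableSet {ω : Fin (n+1) → Bool | ∀ i ∈ U, ω i = true} :=
    MeasurableSet.of_discrete
  have hfun : (fun ω : Fin (n+1) → Bool => if ∀ i ∈ U, ω i = true then (1:ℝ) else 0)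
      = Set.indicator {ω | ∀ i ∈ U, ω i = true} (fun _ => (1:ℝ)) := by
    ext ω
    rw [Set.indicator_apply]
    rfl
  rw [hfun, integral_indicator_const (1:ℝ) hms, measureReal_def, meas_event, smul_eq_mul, mul_one,
    ENNReal.toReal_pow, ENNReal.coe_toReal, NNReal.coe_min, Real.coe_toNNReal _ hp, NNReal.coe_one]

lemma int_badPairs (n k j : ℕ) (p : ℝ) (hp : 0 ≤ p) :
    ∫ ω, ((badPairs n k j ω).card : ℝ) ∂ randSet n p
      = ∑ pr ∈ PD n k j, (min p 1) ^ (pr.1 ∪ pr.2).card := by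
  classical
  have h1 : ∀ ω : Fin (n+1) → Bool, ((badPairs n k j ω).card : ℝ)
      = ∑ pr ∈ PD n k j, (if ∀ i ∈ pr.1 ∪ pr.2, ω i = true then (1:ℝ) else 0) := by
    intro ω
    rw [badPairs, Finset.card_filter]
    push_cast
    rfl
  simp_rw [h1]
  rw [integral_finset_sum]
  · exact Finset.sum_congr rfl fun pr _ => int_event n p hp _
  · exact fun pr _ => Integrable.of_finite

lemma term_bound (k n s : ℕ) (hk : 3 ≤ k) (hs1 : 1 ≤ s) (hsk : s ≤ k - 1) (hn : 3 ≤ n)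
    (K : ℝ) (hK : 1 ≤ K) :
    (((n+1)^(k-1) : ℕ) : ℝ) * (((2^k * (n+1)^(s-1) : ℕ) : ℝ) *
      (min ((K * Real.log n / (n:ℝ)^(k-1)) ^ ((1:ℝ)/k)) 1) ^ (k + s))
      ≤ (2^k * 2^(k+s-2) * K^2) * ((Real.log n)^2 / (n:ℝ)^((1:ℝ)/k)) := by
  have hk0 : (0:ℝ) < k := by positivity
  have hN1 : (1:ℝ) ≤ (n:ℝ) := by exact_mod_cast Nat.one_le_iff_ne_zero.mpr (by omega)
  have hN0 : (0:ℝ) < (n:ℝ) := by linarith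
  have hN3 : (3:ℝ) ≤ (n:ℝ) := by exact_mod_cast hn
  set L := Real.log n with hLdef
  have hL : 1 ≤ L := by
    rw [hLdef]
    have h1 : Real.exp 1 < (n:ℝ) := by
      have := Real.exp_one_lt_d9
      linarith
    have := (Real.lt_log_iff_exp_lt hN0).mpr h1
    linarith
  set base := K * L / (n:ℝ)^(k-1) with hbase
  have hbase0 : 0 ≤ base := by positivity
  set q := min (base ^ ((1:ℝ)/k)) 1 with hq
  have hq0 : 0 ≤ q := le_min (Real.rpow_nonneg hbase0 _) zero_le_one
  set r : ℝ := ((1:ℝ)/k) * (k + s) with hr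
  have hr2 : r ≤ 2 := by
    rw [hr]
    rw [div_mul_eq_mul_div, one_mul, div_le_iff₀ hk0]
    have : (s:ℝ) ≤ (k:ℝ) := by exact_mod_cast Nat.le_of_lt_succ (by omega)
    linarith
  -- q^(k+s) ≤ base^r
  have h1 : q ^ (k+s) ≤ base ^ r := by
    calc q ^ (k+s) ≤ (base ^ ((1:ℝ)/k)) ^ (k+s) :=
          pow_le_pow_left₀ hq0 (min_le_left _ _) _
      _ = base ^ r := by
          rw [← Real.rpow_natCast (base ^ ((1:ℝ)/k)) (k+s), ← Real.rpow_mul hbase0]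
          push_cast
          rw [hr]
  -- base^r ≤ K^2 * L^2 / (N^(k+s-2) * N^(1/k))
  have h2 : base ^ r ≤ K^2 * L^2 / ((n:ℝ)^(k+s-2) * (n:ℝ)^((1:ℝ)/k)) := by
    have hKL : (0:ℝ) ≤ K * L := by positivity
    have hNP : (0:ℝ) ≤ (n:ℝ)^(k-1) := by positivity
    rw [hbase, Real.div_rpow hKL hNP, Real.mul_rpow (by linarith) (by linarith)]
    apply div_le_div₀ (by positivity)
    · have hK2 : K ^ r ≤ K ^ 2 := by
        have := Real.rpow_le_rpow_of_exponent_le hK hr2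
        rwa [show ((2:ℝ)) = ((2:ℕ):ℝ) by norm_num, Real.rpow_natCast] at this
      have hL2 : L ^ r ≤ L ^ 2 := by
        have := Real.rpow_le_rpow_of_exponent_le hL hr2
        rwa [show ((2:ℝ)) = ((2:ℕ):ℝ) by norm_num, Real.rpow_natCast] at this
      have h0a : 0 ≤ K ^ r := Real.rpow_nonneg (by linarith) _
      have h0b : 0 ≤ L ^ 2 := by positivity
      calc K ^ r * L ^ r ≤ K ^ r * L ^ 2 :=
            mul_le_mul_of_nonneg_left hL2 h0a
        _ ≤ K ^ 2 * L ^ 2 := mul_le_mul_of_nonneg_right hK2 h0b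
    · positivity
    · -- N^(k+s-2) * N^(1/k) ≤ (N^(k-1))^r
      have hd : ((n:ℝ)^((k-1:ℕ):ℝ)) ^ r = (n:ℝ) ^ (((k-1:ℕ):ℝ) * r) := by
        rw [← Real.rpow_mul (le_of_lt hN0)]
      have hexp : ((k+s-2:ℕ):ℝ) + (1:ℝ)/k ≤ ((k-1:ℕ):ℝ) * r := by
        rw [hr]
        have hks2 : ((k+s-2:ℕ):ℝ) = (k:ℝ) + (s:ℝ) - 2 := by
          have : 2 ≤ k + s := by omega
          push_cast [Nat.cast_sub this]
          ring
        have hk1 : ((k-1:ℕ):ℝ) = (k:ℝ) - 1 := by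
          have : 1 ≤ k := by omega
          push_cast [Nat.cast_sub this]
          ring
        rw [hks2, hk1]
        have hsk' : (s:ℝ) ≤ (k:ℝ) - 1 := by
          have h' : s ≤ k - 1 := hsk
          have : (s:ℝ) ≤ ((k-1:ℕ):ℝ) := by exact_mod_cast h'
          rwa [hk1] at this
        have hkne : (k:ℝ) ≠ 0 := ne_of_gt hk0
        have key : ((k:ℝ)-1) * ((1:ℝ)/(k:ℝ)*((k:ℝ)+(s:ℝ)))
            = ((k:ℝ)+(s:ℝ)) - ((k:ℝ)+(s:ℝ))/(k:ℝ) := by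
          field_simp
        rw [key]
        have hfrac : ((k:ℝ)+(s:ℝ))/(k:ℝ) + 1/(k:ℝ) ≤ 2 := by
          rw [← add_div, div_le_iff₀ hk0]
          linarith
        linarith
      calc (n:ℝ)^(k+s-2) * (n:ℝ)^((1:ℝ)/k)
          = (n:ℝ) ^ (((k+s-2:ℕ):ℝ) + (1:ℝ)/k) := by
            rw [Real.rpow_add hN0, Real.rpow_natCast]
        _ ≤ (n:ℝ) ^ (((k-1:ℕ):ℝ) * r) := Real.rpow_le_rpow_of_exponent_le hN1 hexp
        _ = ((n:ℝ)^(k-1)) ^ r := by rw [← hd, Real.rpow_natCast]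
  -- combine
  have hA : (((n+1)^(k-1) : ℕ) : ℝ) * ((2^k * (n+1)^(s-1) : ℕ) : ℝ)
      = 2^k * ((n:ℝ)+1)^(k+s-2) := by
    push_cast
    rw [show (k+s-2) = (k-1)+(s-1) by omega, pow_add]
    ring
  have hB : ((n:ℝ)+1)^(k+s-2) ≤ 2^(k+s-2) * (n:ℝ)^(k+s-2) := by
    rw [← mul_pow]
    exact pow_le_pow_left₀ (by linarith) (by linarith) _
  calc (((n+1)^(k-1) : ℕ) : ℝ) * (((2^k * (n+1)^(s-1) : ℕ) : ℝ) * q ^ (k + s))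
      = ((((n+1)^(k-1) : ℕ) : ℝ) * ((2^k * (n+1)^(s-1) : ℕ) : ℝ)) * q ^ (k+s) := by ring
    _ = (2^k * ((n:ℝ)+1)^(k+s-2)) * q ^ (k+s) := by rw [hA]
    _ ≤ (2^k * (2^(k+s-2) * (n:ℝ)^(k+s-2))) * (K^2 * L^2 / ((n:ℝ)^(k+s-2) * (n:ℝ)^((1:ℝ)/k))) := by
        apply mul_le_mul
        · exact mul_le_mul_of_nonneg_left hB (by positivity)
        · exact h1.trans h2
        · positivity
        · positivity
    _ = (2^k * 2^(k+s-2) * K^2) * (L^2 / (n:ℝ)^((1:ℝ)/k)) := by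
        have hx : ((n:ℝ)^(k+s-2)) ≠ 0 := by positivity
        have hy : ((n:ℝ)^((1:ℝ)/k)) ≠ 0 := by positivity
        field_simp

lemma tendsto_eBound (k : ℕ) (hk : 3 ≤ k) (K : ℝ) (hK : 1 ≤ K) :
    Tendsto (fun n : ℕ => (((n+1)^(k-1) : ℕ) : ℝ) *
      ∑ s ∈ Finset.Icc 1 (k-1), ((2^k * (n+1)^(s-1) : ℕ) : ℝ) *
        (min ((K * Real.log n / (n:ℝ)^(k-1)) ^ ((1:ℝ)/k)) 1) ^ (k + s))
      atTop (nhds 0) := by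
  have hrw : ∀ n : ℕ, (((n+1)^(k-1) : ℕ) : ℝ) *
      ∑ s ∈ Finset.Icc 1 (k-1), ((2^k * (n+1)^(s-1) : ℕ) : ℝ) *
        (min ((K * Real.log n / (n:ℝ)^(k-1)) ^ ((1:ℝ)/k)) 1) ^ (k + s)
      = ∑ s ∈ Finset.Icc 1 (k-1), (((n+1)^(k-1) : ℕ) : ℝ) *
        (((2^k * (n+1)^(s-1) : ℕ) : ℝ) *
          (min ((K * Real.log n / (n:ℝ)^(k-1)) ^ ((1:ℝ)/k)) 1) ^ (k + s)) := fun n =>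
    Finset.mul_sum _ _ _
  simp_rw [hrw]
  rw [show (0:ℝ) = ∑ _s ∈ Finset.Icc 1 (k-1), (0:ℝ) from (Finset.sum_const_zero).symm]
  apply tendsto_finset_sum
  intro s hs
  rw [Finset.mem_Icc] at hs
  -- squeeze
  have hup : Tendsto (fun n : ℕ => (2^k * 2^(k+s-2) * K^2) *
      ((Real.log n)^2 / (n:ℝ)^((1:ℝ)/k))) atTop (nhds 0) := by
    have h0 : Tendsto (fun x : ℝ => (Real.log x)^2 / x^((1:ℝ)/k)) atTop (nhds 0) := by
      have hlo := (isLittleO_log_rpow_rpow_atTop (2:ℝ)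
        (by positivity : (0:ℝ) < (1:ℝ)/k)).tendsto_div_nhds_zero
      have : (fun x : ℝ => Real.log x ^ (2:ℝ) / x ^ ((1:ℝ)/k))
          = fun x : ℝ => (Real.log x)^2 / x^((1:ℝ)/k) := by
        funext x
        rw [show ((2:ℝ)) = ((2:ℕ):ℝ) by norm_num, Real.rpow_natCast]
      rwa [this] at hlo
    have h1 : Tendsto (fun n : ℕ => (Real.log n)^2 / (n:ℝ)^((1:ℝ)/k)) atTop (nhds 0) :=
      h0.comp tendsto_natCast_atTop_atTop
    have := h1.const_mul (2^k * 2^(k+s-2) * K^2 : ℝ)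
    simpa using this
  apply squeeze_zero' (Eventually.of_forall fun n => by positivity) _ hup
  filter_upwards [eventually_ge_atTop 3] with n hn
  exact term_bound k n s hk hs.1 hs.2 hn K hK

/-- Lemma 3.5. In the setting of Theorem 3.1, there is a sequence
`ε_n → 0` such that for all `n` and all `j ∈ [αn, (k-α)n]`,
`E[Y*_{k,n}(j)] ≤ E[Y_{k,n}(j)] ≤ E[Y*_{k,n}(j)] + ε_n`. -/
theorem expectation_Y_close_to_Ystar (k : ℕ) (hk : 3 ≤ k) (α ε : ℝ)
    (hα0 : 0 < α) (hα1 : α < 1) (hε : 0 < ε) :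
    ∃ e : ℕ → ℝ, Tendsto e atTop (nhds 0) ∧
      ∀ n : ℕ, ∀ j : ℕ, α * n ≤ (j : ℝ) → (j : ℝ) ≤ ((k : ℝ) - α) * n →
        (∫ ω, (Ystar n k j ω : ℝ)
            ∂ randSet n (((4 + ε) * (k.factorial : ℝ) ^ 2 / α ^ (k - 1) * Real.log n /
              (n : ℝ) ^ (k - 1)) ^ ((1 : ℝ) / k))) ≤
          (∫ ω, (Y n k j ω : ℝ)
            ∂ randSet n (((4 + ε) * (k.factorial : ℝ) ^ 2 / α ^ (k - 1) * Real.log n /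
              (n : ℝ) ^ (k - 1)) ^ ((1 : ℝ) / k))) ∧
        (∫ ω, (Y n k j ω : ℝ)
            ∂ randSet n (((4 + ε) * (k.factorial : ℝ) ^ 2 / α ^ (k - 1) * Real.log n /
              (n : ℝ) ^ (k - 1)) ^ ((1 : ℝ) / k))) ≤
          (∫ ω, (Ystar n k j ω : ℝ)
            ∂ randSet n (((4 + ε) * (k.factorial : ℝ) ^ 2 / α ^ (k - 1) * Real.log n /
              (n : ℝ) ^ (k - 1)) ^ ((1 : ℝ) / k))) + e n := by
  classical
  set K : ℝ := (4 + ε) * (k.factorial : ℝ) ^ 2 / α ^ (k - 1) with hKdef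
  have hfac1 : (1:ℝ) ≤ (k.factorial : ℝ) := by
    exact_mod_cast Nat.one_le_iff_ne_zero.mpr (Nat.factorial_ne_zero k)
  have hαpow : 0 < α ^ (k - 1) := pow_pos hα0 _
  have hαpow1 : α ^ (k - 1) ≤ 1 := pow_le_one₀ (le_of_lt hα0) (le_of_lt hα1)
  have hK1 : 1 ≤ K := by
    rw [hKdef, le_div_iff₀ hαpow, one_mul]
    nlinarith
  have hlog : ∀ n : ℕ, 0 ≤ Real.log n := by
    intro n
    rcases Nat.eq_zero_or_pos n with h | h
    · simp [h]
    · exact Real.log_nonneg (by exact_mod_cast h)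
  have hp0 : ∀ n : ℕ, 0 ≤ (K * Real.log n / (n : ℝ) ^ (k - 1)) ^ ((1 : ℝ) / k) := by
    intro n
    apply Real.rpow_nonneg
    apply div_nonneg (mul_nonneg (by linarith) (hlog n)) (pow_nonneg (Nat.cast_nonneg n) _)
  refine ⟨fun n => (((n+1)^(k-1) : ℕ) : ℝ) *
      ∑ s ∈ Finset.Icc 1 (k-1), ((2^k * (n+1)^(s-1) : ℕ) : ℝ) *
        (min ((K * Real.log n / (n:ℝ)^(k-1)) ^ ((1:ℝ)/k)) 1) ^ (k + s),
    tendsto_eBound k hk K hK1, ?_⟩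
  intro n j _ _
  set p : ℝ := (K * Real.log n / (n : ℝ) ^ (k - 1)) ^ ((1 : ℝ) / k) with hpdef
  constructor
  · apply integral_mono Integrable.of_finite Integrable.of_finite
    intro ω
    show (Ystar n k j ω : ℝ) ≤ (Y n k j ω : ℝ)
    exact_mod_cast Ystar_le_Y n k j ω
  · have step1 : (∫ ω, (Y n k j ω : ℝ) ∂ randSet n p)
        ≤ ∫ ω, ((Ystar n k j ω : ℝ) + ((badPairs n k j ω).card : ℝ)) ∂ randSet n p := by
      apply integral_mono Integrable.of_finite Integrable.of_finite
      intro ω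
      show (Y n k j ω : ℝ) ≤ (Ystar n k j ω : ℝ) + ((badPairs n k j ω).card : ℝ)
      exact_mod_cast Y_le_Ystar_add n k j ω
    have step2 : (∫ ω, ((Ystar n k j ω : ℝ) + ((badPairs n k j ω).card : ℝ)) ∂ randSet n p)
        = (∫ ω, (Ystar n k j ω : ℝ) ∂ randSet n p)
          + ∫ ω, ((badPairs n k j ω).card : ℝ) ∂ randSet n p :=
      integral_add Integrable.of_finite Integrable.of_finite
    have step3 : (∫ ω, ((badPairs n k j ω).card : ℝ) ∂ randSet n p)
        = ∑ pr ∈ PD n k j, (min p 1) ^ (pr.1 ∪ pr.2).card := int_badPairs n k j p (hp0 n)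
    have step4 : ∑ pr ∈ PD n k j, (min p 1) ^ (pr.1 ∪ pr.2).card
        ≤ (((n+1)^(k-1) : ℕ) : ℝ) *
          ∑ s ∈ Finset.Icc 1 (k-1), ((2^k * (n+1)^(s-1) : ℕ) : ℝ) * (min p 1) ^ (k + s) :=
      sumBound n k j (by omega) (min p 1) (le_min (hp0 n) zero_le_one) (min_le_right _ _)
    calc (∫ ω, (Y n k j ω : ℝ) ∂ randSet n p) ≤ _ := step1
      _ = _ := step2
      _ ≤ _ := by rw [step3]; exact add_le_add_right step4 _
end

section
/- (Theorem 3.7, uniform form) Fix an integer k ≥ 3, α ∈ (0,1), ε > 0, and set K = (4+ε)·(k!)²/α^{k−1} and p_n = (K·log n / n^{k−1})^{1/k}. Then there exist a constant δ > 0 and N ∈ ℕ such that for all n ≥ N and every integer j with α·n ≤ j ≤ (k−α)·n, P(Y*_{k,n}(j) ≥ δ·log n) ≤ 2·n^{−5/4}. -/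
open MeasureTheory Filter
open scoped ENNReal

section Aux

lemma cyl_measure (n : ℕ) (p : ℝ) (U : Finset (Fin (n+1))) :
    randSet n p {ω | ∀ i ∈ U, ω i = true} = (min (ENNReal.ofReal p) 1) ^ U.card := by
  classical
  have hset : {ω : Fin (n+1) → Bool | ∀ i ∈ U, ω i = true} =
      Set.pi Set.univ (fun i => if i ∈ U then ({true} : Set Bool) else Set.univ) := by
    ext ω
    simp only [Set.mem_setOf_eq, Set.mem_pi, Set.mem_univ, forall_true_left]
    constructor
    · intro h i
      by_cases hi : i ∈ U
      · simpa [hi] using h i hi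
      · simp [hi]
    · intro h i hi
      simpa [hi] using h i
  rw [randSet, hset, Measure.pi_pi]
  have hval : ∀ i : Fin (n+1),
      (bern p).toMeasure (if i ∈ U then ({true} : Set Bool) else Set.univ)
        = if i ∈ U then min (ENNReal.ofReal p) 1 else 1 := by
    intro i
    by_cases hi : i ∈ U
    · simp only [hi, if_true]
      rw [PMF.toMeasure_apply_singleton _ _ (measurableSet_singleton _)]
      simp only [bern, PMF.bernoulli_apply, cond_true, ENNReal.coe_min, ENNReal.coe_one]
      rfl
    · simp only [hi, if_false]
      exact measure_univ
  simp_rw [hval]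
  rw [Finset.prod_ite_mem, Finset.univ_inter, Finset.prod_const]

noncomputable def trunc (n : ℕ) (S : Finset (Fin (n+1))) : Finset (Fin (n+1)) :=
  if h : S.Nonempty then S.erase (S.max' h) else ∅

lemma card_repr_le (n k j : ℕ) (hk : 1 ≤ k) :
    (Finset.univ.filter fun S : Finset (Fin (n+1)) =>
        S.card = k ∧ (∑ i ∈ S, (i : ℕ)) = j).card ≤ (n+1) ^ (k-1) := by
  classical
  set R := Finset.univ.filter fun S : Finset (Fin (n+1)) =>
      S.card = k ∧ (∑ i ∈ S, (i : ℕ)) = j with hR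
  have hR' : ∀ S ∈ R, S.card = k ∧ (∑ i ∈ S, (i:ℕ)) = j := by
    intro S hS
    simpa [hR] using (Finset.mem_filter.mp hS).2
  have hne : ∀ S ∈ R, S.Nonempty := fun S hS =>
    Finset.card_pos.mp (by rw [(hR' S hS).1]; omega)
  have hrec : ∀ S, ∀ hS : S ∈ R,
      S = insert (S.max' (hne S hS)) (trunc n S) ∧
      ((S.max' (hne S hS) : ℕ)) + ∑ i ∈ trunc n S, (i:ℕ) = j := by
    intro S hS
    have h := hne S hS
    constructor
    · rw [trunc, dif_pos h]
      exact (Finset.insert_erase (S.max'_mem h)).symm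
    · rw [trunc, dif_pos h, Finset.add_sum_erase _ _ (S.max'_mem h)]
      exact (hR' S hS).2
  have hinj : Set.InjOn (trunc n) R := by
    intro S₁ h₁ S₂ h₂ heq
    obtain ⟨e₁, s₁⟩ := hrec S₁ h₁
    obtain ⟨e₂, s₂⟩ := hrec S₂ h₂
    have hmax : (S₁.max' (hne S₁ h₁) : ℕ) = (S₂.max' (hne S₂ h₂) : ℕ) := by
      rw [heq] at s₁; omega
    have hm : S₁.max' (hne S₁ h₁) = S₂.max' (hne S₂ h₂) := Fin.ext hmax
    rw [e₁, e₂, heq, hm]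
  have hmap : ∀ S ∈ R, trunc n S ∈ Finset.univ.powersetCard (k-1) := by
    intro S hS
    rw [Finset.mem_powersetCard_univ, trunc, dif_pos (hne S hS),
      Finset.card_erase_of_mem (S.max'_mem _), (hR' S hS).1]
  calc R.card ≤ ((Finset.univ : Finset (Fin (n+1))).powersetCard (k-1)).card :=
        Finset.card_le_card_of_injOn _ hmap hinj
    _ = (n+1).choose (k-1) := by
        rw [Finset.card_powersetCard, Finset.card_univ, Fintype.card_fin]
    _ ≤ (n+1)^(k-1) := Nat.choose_le_pow _ _

lemma pow_le_exp_mul_factorial (t : ℕ) : (t:ℝ)^t ≤ Real.exp t * t.factorial := by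
  have h2 : (t:ℝ)^t / t.factorial ≤ Real.exp t := by
    calc (t:ℝ)^t / t.factorial
        ≤ ∑ i ∈ Finset.range (t+1), (t:ℝ)^i / i.factorial := by
          refine Finset.single_le_sum (f := fun i => (t:ℝ)^i / (i.factorial : ℝ))
            (fun i _ => by positivity) (Finset.self_mem_range_succ t)
      _ ≤ Real.exp t := Real.sum_le_exp_of_nonneg (Nat.cast_nonneg t) _
  have hf : (0:ℝ) < t.factorial := by exact_mod_cast t.factorial_pos
  rw [div_le_iff₀ hf] at h2
  exact h2

end Aux

/-- Theorem 3.7, uniform form. In the setting of Theorem 3.1, there are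
a constant `δ > 0` and `N` such that for all `n ≥ N` and all `j ∈ [αn, (k-α)n]`,
`P(Y*_{k,n}(j) ≥ δ·log n) ≤ 2·n^{-5/4}`. -/

theorem Ystar_upper_tail (k : ℕ) (hk : 3 ≤ k) (α ε : ℝ)
    (hα0 : 0 < α) (hα1 : α < 1) (hε : 0 < ε) :
    ∃ δ : ℝ, 0 < δ ∧ ∃ N : ℕ,
      ∀ n : ℕ, N ≤ n → ∀ j : ℕ, α * n ≤ (j : ℝ) → (j : ℝ) ≤ ((k : ℝ) - α) * n →
        randSet n (((4 + ε) * (k.factorial : ℝ) ^ 2 / α ^ (k - 1) * Real.log n /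
              (n : ℝ) ^ (k - 1)) ^ ((1 : ℝ) / k))
            {ω | δ * Real.log n ≤ (Ystar n k j ω : ℝ)} ≤
          ENNReal.ofReal (2 * (n : ℝ) ^ (-(5 : ℝ) / 4)) := by
  classical
  have hfact1 : (1:ℝ) ≤ (k.factorial : ℝ) := by exact_mod_cast k.factorial_pos
  set K : ℝ := (4 + ε) * (k.factorial : ℝ) ^ 2 / α ^ (k - 1) with hKdef
  have hαle : α ^ (k-1) ≤ 1 := pow_le_one₀ hα0.le hα1.le
  have hαpos : 0 < α ^ (k-1) := pow_pos hα0 _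
  have hK4 : 4 ≤ K := by
    rw [hKdef, le_div_iff₀ hαpos]
    nlinarith
  set C : ℝ := 2 ^ (k - 1) * K with hCdef
  have h2pow : (1:ℝ) ≤ 2 ^ (k-1) := one_le_pow₀ one_le_two
  have hC4 : 4 ≤ C := by nlinarith
  have hCpos : 0 < C := by linarith
  have hexp2 : (1:ℝ) ≤ Real.exp 2 := Real.one_le_exp (by norm_num)
  set δ : ℝ := Real.exp 2 * C with hδdef
  clear_value K C δ
  have hδ4 : 4 ≤ δ := by nlinarith
  have hδpos : 0 < δ := by linarith
  refine ⟨δ, hδpos, 2, ?_⟩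
  intro n hn j _ _
  have hn1 : (1:ℝ) < n := by exact_mod_cast (by omega : 1 < n)
  set L := Real.log (n:ℝ) with hLdef
  have hL : 0 < L := Real.log_pos hn1
  set x : ℝ := K * L / (n:ℝ) ^ (k-1) with hxdef
  have hnpow : (0:ℝ) < (n:ℝ)^(k-1) := by positivity
  have hx0 : 0 ≤ x := div_nonneg (mul_nonneg (by linarith) hL.le) hnpow.le
  set p : ℝ := x ^ ((1:ℝ)/(k:ℝ)) with hpdef
  have hp0 : 0 ≤ p := Real.rpow_nonneg hx0 _
  set t : ℕ := ⌈δ * L⌉₊ with htdef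
  have htpos : 0 < t := Nat.ceil_pos.mpr (mul_pos hδpos hL)
  have htge : δ * L ≤ (t:ℝ) := Nat.le_ceil _
  have htR : (0:ℝ) < t := by exact_mod_cast htpos
  set R : Finset (Finset (Fin (n+1))) := Finset.univ.filter fun S =>
      S.card = k ∧ (∑ i ∈ S, (i : ℕ)) = j with hRdef
  set F : Finset (Finset (Finset (Fin (n+1)))) :=
      (R.powersetCard t).filter fun 𝒞 =>
        (𝒞 : Set (Finset (Fin (n+1)))).Pairwise fun S T => Disjoint S T with hFdef
  set q : ℝ≥0∞ := min (ENNReal.ofReal p) 1 with hqdef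
  clear_value L x p t R F q
  -- event inclusion
  have hsub : {ω : Fin (n+1) → Bool | δ * L ≤ (Ystar n k j ω : ℝ)} ⊆
      ⋃ 𝒞 ∈ F, {ω : Fin (n+1) → Bool | ∀ i ∈ 𝒞.biUnion id, ω i = true} := by
    intro ω hω
    have ht' : t ≤ Ystar n k j ω := by rw [htdef]; exact Nat.ceil_le.mpr hω
    unfold Ystar at ht'
    obtain ⟨𝒞₀, h𝒞₀, hcard⟩ := (Finset.le_sup_iff (show (⊥:ℕ) < t from htpos)).mp ht'
    rw [Finset.mem_filter] at h𝒞₀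
    obtain ⟨-, hrep, hdisj⟩ := h𝒞₀
    obtain ⟨𝒞, h𝒞sub, h𝒞card⟩ := Finset.exists_subset_card_eq hcard
    have hrep' : ∀ S ∈ 𝒞, S ∈ repFinsets n k j ω := fun S hS => hrep S (h𝒞sub hS)
    simp only [Set.mem_iUnion]
    refine ⟨𝒞, ?_, ?_⟩
    · rw [hFdef, Finset.mem_filter, Finset.mem_powersetCard]
      refine ⟨⟨?_, h𝒞card⟩, hdisj.mono (by exact_mod_cast h𝒞sub)⟩
      intro S hS
      have hSr := hrep' S hS
      rw [repFinsets, Finset.mem_filter] at hSr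
      rw [hRdef, Finset.mem_filter]
      exact ⟨Finset.mem_univ _, hSr.2.1, hSr.2.2.1⟩
    · intro i hi
      rw [Finset.mem_biUnion] at hi
      obtain ⟨S, hS, hiS⟩ := hi
      have hSr := hrep' S hS
      rw [repFinsets, Finset.mem_filter] at hSr
      exact hSr.2.2.2 i hiS
  have hmeas : randSet n p {ω : Fin (n+1) → Bool | δ * L ≤ (Ystar n k j ω : ℝ)} ≤
      (F.card : ℝ≥0∞) * q ^ (t*k) := by
    calc randSet n p {ω : Fin (n+1) → Bool | δ * L ≤ (Ystar n k j ω : ℝ)}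
        ≤ randSet n p (⋃ 𝒞 ∈ F, {ω : Fin (n+1) → Bool | ∀ i ∈ 𝒞.biUnion id, ω i = true}) :=
          measure_mono hsub
      _ ≤ ∑ 𝒞 ∈ F, randSet n p {ω : Fin (n+1) → Bool | ∀ i ∈ 𝒞.biUnion id, ω i = true} :=
          measure_biUnion_finset_le _ _
      _ = ∑ _𝒞 ∈ F, q ^ (t*k) := by
          refine Finset.sum_congr rfl fun 𝒞 h𝒞 => ?_
          rw [cyl_measure, ← hqdef]
          rw [hFdef, Finset.mem_filter, Finset.mem_powersetCard] at h𝒞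
          obtain ⟨⟨hsubR, hcard⟩, hdisj⟩ := h𝒞
          congr 1
          have hbc : (𝒞.biUnion id).card = ∑ u ∈ 𝒞, (id u).card :=
            Finset.card_biUnion (fun S hS T hT hST => hdisj hS hT hST)
          have hcards : ∀ S ∈ 𝒞, (id S).card = k := by
            intro S hS
            have := hsubR hS
            rw [hRdef, Finset.mem_filter] at this
            exact this.2.1
          rw [hbc, Finset.sum_congr rfl hcards, Finset.sum_const, hcard, smul_eq_mul]
      _ = (F.card : ℝ≥0∞) * q ^ (t*k) := by rw [Finset.sum_const, nsmul_eq_mul]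
  have hFcard : (F.card : ℝ≥0∞) ≤ ((R.card.choose t : ℕ) : ℝ≥0∞) := by
    have h1 : F.card ≤ (R.powersetCard t).card := by
      rw [hFdef]; exact Finset.card_filter_le _ _
    rw [Finset.card_powersetCard] at h1
    exact_mod_cast h1
  have step2 : (F.card : ℝ≥0∞) * q ^ (t*k) ≤
      ENNReal.ofReal ((R.card.choose t : ℝ) * p ^ (t*k)) := by
    rw [ENNReal.ofReal_mul (by positivity), ENNReal.ofReal_pow hp0, ENNReal.ofReal_natCast]
    refine mul_le_mul' hFcard ?_
    rw [hqdef]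
    exact pow_le_pow_left' (min_le_left _ _) _
  -- the real-number estimate
  have hreal : (R.card.choose t : ℝ) * p ^ (t*k) ≤ 2 * (n:ℝ) ^ (-(5:ℝ)/4) := by
    have hk0 : (k:ℝ) ≠ 0 := Nat.cast_ne_zero.mpr (by omega)
    have hpk : p ^ (t*k) = x ^ t := by
      rw [hpdef, ← Real.rpow_natCast (x ^ ((1:ℝ)/(k:ℝ))) (t*k), ← Real.rpow_mul hx0]
      rw [show (1:ℝ)/(k:ℝ) * ((t*k : ℕ):ℝ) = ((t:ℕ):ℝ) by push_cast; field_simp,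
        Real.rpow_natCast]
    have hM : (R.card : ℝ) ≤ ((n:ℝ)+1)^(k-1) := by
      have h := card_repr_le n k j (by omega)
      rw [hRdef]
      calc ((Finset.univ.filter fun S : Finset (Fin (n+1)) =>
              S.card = k ∧ (∑ i ∈ S, (i : ℕ)) = j).card : ℝ)
          ≤ (((n+1)^(k-1) : ℕ) : ℝ) := by exact_mod_cast h
        _ = ((n:ℝ)+1)^(k-1) := by push_cast; ring
    have hfac : (0:ℝ) < t.factorial := by exact_mod_cast t.factorial_pos
    have hpow : ((n:ℝ)+1)^(k-1) ≤ 2^(k-1) * (n:ℝ)^(k-1) := by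
      calc ((n:ℝ)+1)^(k-1) ≤ (2*(n:ℝ))^(k-1) :=
            pow_le_pow_left₀ (by positivity) (by linarith) _
        _ = 2^(k-1) * (n:ℝ)^(k-1) := mul_pow _ _ _
    have hCL : ((n:ℝ)+1)^(k-1) * x ≤ C * L := by
      have h1 : ((n:ℝ)+1)^(k-1) * x ≤ (2^(k-1) * (n:ℝ)^(k-1)) * x :=
        mul_le_mul_of_nonneg_right hpow hx0
      have h2 : (2^(k-1) * (n:ℝ)^(k-1)) * x = C * L := by
        rw [hxdef, hCdef]
        field_simp
      linarith
    have hbase0 : (0:ℝ) ≤ ((n:ℝ)+1)^(k-1) * x := mul_nonneg (by positivity) hx0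
    calc (R.card.choose t : ℝ) * p ^ (t*k)
        = (R.card.choose t : ℝ) * x^t := by rw [hpk]
      _ ≤ ((R.card:ℝ)^t / t.factorial) * x^t :=
          mul_le_mul_of_nonneg_right (Nat.choose_le_pow_div t R.card) (pow_nonneg hx0 _)
      _ ≤ (((((n:ℝ)+1)^(k-1))^t) / t.factorial) * x^t := by
          refine mul_le_mul_of_nonneg_right ?_ (pow_nonneg hx0 _)
          exact div_le_div_of_nonneg_right (pow_le_pow_left₀ (Nat.cast_nonneg _) hM t) hfac.le
      _ = (((n:ℝ)+1)^(k-1) * x)^t / t.factorial := by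
          rw [mul_pow]; ring
      _ ≤ (C*L)^t / t.factorial :=
          div_le_div_of_nonneg_right (pow_le_pow_left₀ hbase0 hCL t) hfac.le
      _ ≤ (C*L)^t * Real.exp t / (t:ℝ)^t := by
          rw [div_le_div_iff₀ hfac (pow_pos htR _)]
          calc (C*L)^t * (t:ℝ)^t
              ≤ (C*L)^t * (Real.exp t * t.factorial) :=
                mul_le_mul_of_nonneg_left (pow_le_exp_mul_factorial t)
                  (pow_nonneg (mul_nonneg hCpos.le hL.le) t)
            _ = (C*L)^t * Real.exp t * (t.factorial:ℝ) := by ring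
      _ = ((C*L*Real.exp 1)/(t:ℝ))^t := by
          rw [← Real.exp_one_pow]; ring
      _ ≤ (Real.exp (-1))^t := by
          apply pow_le_pow_left₀
            (div_nonneg (mul_nonneg (mul_nonneg hCpos.le hL.le) (Real.exp_pos 1).le) htR.le)
          rw [div_le_iff₀ htR]
          have he : Real.exp (-1) * Real.exp 2 = Real.exp 1 := by
            rw [← Real.exp_add]; norm_num
          have hepos : (0:ℝ) < Real.exp (-1) := Real.exp_pos _
          calc C*L*Real.exp 1 = Real.exp (-1) * (δ*L) := by
                rw [hδdef, ← he]; ring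
            _ ≤ Real.exp (-1) * t :=
                mul_le_mul_of_nonneg_left htge hepos.le
      _ = Real.exp ((t:ℝ) * (-1)) := (Real.exp_nat_mul _ _).symm
      _ ≤ Real.exp (L * (-δ)) := by
          apply Real.exp_le_exp.mpr
          nlinarith
      _ = (n:ℝ) ^ (-δ) := by
          rw [Real.rpow_def_of_pos (by linarith : (0:ℝ) < (n:ℝ)), hLdef]
      _ ≤ (n:ℝ) ^ (-(5:ℝ)/4) := by
          apply Real.rpow_le_rpow_of_exponent_le (by linarith)
          linarith
      _ ≤ 2 * (n:ℝ) ^ (-(5:ℝ)/4) := by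
          have h0 : (0:ℝ) ≤ (n:ℝ)^(-(5:ℝ)/4) := Real.rpow_nonneg (by linarith) _
          linarith
  calc randSet n p {ω : Fin (n+1) → Bool | δ * L ≤ (Ystar n k j ω : ℝ)}
      ≤ (F.card : ℝ≥0∞) * q ^ (t*k) := hmeas
    _ ≤ ENNReal.ofReal ((R.card.choose t : ℝ) * p ^ (t*k)) := step2
    _ ≤ ENNReal.ofReal (2 * (n:ℝ) ^ (-(5:ℝ)/4)) := ENNReal.ofReal_le_ofReal hreal
end
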